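/- Stability bound (core of Lemma 4.1): let ι₁, ι₂ be finite index types of cardinalities n₁, n₂, let q ≥ 1 and M ≥ 0 be real numbers, and let f : ι₁ → ℝ⁴, g : ι₂ → ℝ⁴ be families such that every point f i = ![aᵢ, bᵢ, cᵢ, dᵢ] satisfies aᵢ ≤ bᵢ, cᵢ ≤ dᵢ, bᵢ − aᵢ ≤ M and dᵢ − cᵢ ≤ M, and similarly for every point of g. Define the diagonal-augmented families f̃, g̃ : ι₁ ⊕ ι₂ → ℝ⁴ by f̃(inl i) = f i, f̃(inr j) = Diag(g j), g̃(inl i) = Diag(f i), g̃(inr j) = g j. Then D_q(f̃, g̃) ≤ (n₁ · M^q + n₂ · M^q)^{1/q}. (In Lemma 4.1, n₁ and n₂ are bounded by N_{RG_{f₁}}·C_{f₁}·max_p C_{f₂^p} and N_{RG_{g₁}}·C_{g₁}·max_p C_{g₂^p} respectively, and M = max of the amplitudes of f₁, f₂, g₁, g₂.) -/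
import Mathlib


/-- The `q`-Wasserstein matching distance between two finite families of points in a
seminormed additive commutative group: the infimum over permutations `σ` of
`(∑ i, ‖f i - g (σ i)‖ ^ q) ^ (1/q)`. -/
noncomputable def wassersteinDist {ι : Type*} [Fintype ι] {E : Type*}
    [SeminormedAddCommGroup E] (q : ℝ) (f g : ι → E) : ℝ :=
  ⨅ σ : Equiv.Perm ι, (∑ i, ‖f i - g (σ i)‖ ^ q) ^ (1 / q)

/-- The diagonal projection of a point `![a, b, c, d]` of a multi-dimensional
persistence diagram of a bivariate field:
`Diag ![a, b, c, d] = ![(a+b)/2, (a+b)/2, (c+d)/2, (c+d)/2]`. -/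
noncomputable def Diag4 (x : Fin 4 → ℝ) : Fin 4 → ℝ :=
  ![(x 0 + x 1) / 2, (x 0 + x 1) / 2, (x 2 + x 3) / 2, (x 2 + x 3) / 2]

lemma diag_dist_le (M : ℝ) (hM : 0 ≤ M) (x : Fin 4 → ℝ)
    (h : x 0 ≤ x 1 ∧ x 2 ≤ x 3 ∧ x 1 - x 0 ≤ M ∧ x 3 - x 2 ≤ M) :
    ‖x - Diag4 x‖ ≤ M := by
  obtain ⟨h1, h2, h3, h4⟩ := h
  rw [pi_norm_le_iff_of_nonneg hM]
  intro k
  fin_cases k <;>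
    simp [Diag4, Real.norm_eq_abs, abs_le] <;> constructor <;> linarith

/-- Stability bound (core of Lemma 4.1): if every birth–death quadruple of `f` and
`g` has persistences at most `M`, then the Wasserstein matching distance between the
diagonal-augmented families is at most `(n₁ M^q + n₂ M^q)^(1/q)`. -/
theorem stability_bound {ι₁ ι₂ : Type*} [Fintype ι₁] [Fintype ι₂]
    (q M : ℝ) (hq : 1 ≤ q) (hM : 0 ≤ M)
    (f : ι₁ → Fin 4 → ℝ) (g : ι₂ → Fin 4 → ℝ)
    (hf : ∀ i, f i 0 ≤ f i 1 ∧ f i 2 ≤ f i 3 ∧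
      f i 1 - f i 0 ≤ M ∧ f i 3 - f i 2 ≤ M)
    (hg : ∀ j, g j 0 ≤ g j 1 ∧ g j 2 ≤ g j 3 ∧
      g j 1 - g j 0 ≤ M ∧ g j 3 - g j 2 ≤ M) :
    wassersteinDist q
        (Sum.elim f (fun j => Diag4 (g j)))
        (Sum.elim (fun i => Diag4 (f i)) g)
      ≤ ((Fintype.card ι₁ : ℝ) * M ^ q + (Fintype.card ι₂ : ℝ) * M ^ q) ^ (1 / q) := by
  have hq0 : 0 < q := lt_of_lt_of_le one_pos hq
  have hbdd : BddBelow (Set.range fun σ : Equiv.Perm (ι₁ ⊕ ι₂) =>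
      (∑ i, ‖Sum.elim f (fun j => Diag4 (g j)) i -
        Sum.elim (fun i => Diag4 (f i)) g (σ i)‖ ^ q) ^ (1 / q)) := by
    refine ⟨0, ?_⟩
    rintro x ⟨σ, rfl⟩
    positivity
  refine le_trans (ciInf_le hbdd (Equiv.refl _)) ?_
  apply Real.rpow_le_rpow (by positivity) ?_ (by positivity)
  rw [Fintype.sum_sum_type]
  gcongr with i _ j _
  · calc ∑ i : ι₁, ‖Sum.elim f (fun j => Diag4 (g j)) (Sum.inl i) -
            Sum.elim (fun i => Diag4 (f i)) g ((Equiv.refl (ι₁ ⊕ ι₂)) (Sum.inl i))‖ ^ q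
        ≤ ∑ _i : ι₁, M ^ q := by
          apply Finset.sum_le_sum
          intro i _
          simp only [Equiv.refl_apply, Sum.elim_inl]
          exact Real.rpow_le_rpow (norm_nonneg _) (diag_dist_le M hM (f i) (hf i)) hq0.le
      _ = (Fintype.card ι₁ : ℝ) * M ^ q := by
          simp [Finset.sum_const, nsmul_eq_mul]
  · calc ∑ j : ι₂, ‖Sum.elim f (fun j => Diag4 (g j)) (Sum.inr j) -
            Sum.elim (fun i => Diag4 (f i)) g ((Equiv.refl (ι₁ ⊕ ι₂)) (Sum.inr j))‖ ^ q
        ≤ ∑ _j : ι₂, M ^ q := by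
          apply Finset.sum_le_sum
          intro j _
          simp only [Equiv.refl_apply, Sum.elim_inr]
          rw [show Diag4 (g j) - g j = -(g j - Diag4 (g j)) by abel, norm_neg]
          exact Real.rpow_le_rpow (norm_nonneg _) (diag_dist_le M hM (g j) (hg j)) hq0.le
      _ = (Fintype.card ι₂ : ℝ) * M ^ q := by
          simp [Finset.sum_const, nsmul_eq_mul]
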